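/- Let T be the Minkowski-centered equilateral triangle with vertices p¹ = (0,1), p² = (−√3/2,−1/2), p³ = (√3/2,−1/2), and for α ∈ [1/3, 2/3] let T_α = conv({αp¹+(1−α)p², αp²+(1−α)p³, αp³+(1−α)p¹}). Then D_MAX(T_α, T) = R(T_α, T) and r(T_α, T) = (1 − 3α + 3α²)·R(T_α, T). -/

import Mathlib

open Pointwise Set

variable {V : Type*} [NormedAddCommGroup V] [NormedSpace ℝ V]

/-- Circumradius `R(K,C) = inf {ρ ≥ 0 : ∃ t, K ⊆ t + ρC}`. -/
noncomputable def circumradius (K C : Set V) : ℝ :=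
  sInf {ρ : ℝ | 0 ≤ ρ ∧ ∃ t : V, K ⊆ t +ᵥ ρ • C}

/-- Inradius `r(K,C) = sup {ρ ≥ 0 : ∃ t, t + ρC ⊆ K}`. -/
noncomputable def inradius (K C : Set V) : ℝ :=
  sSup {ρ : ℝ | 0 ≤ ρ ∧ ∃ t : V, t +ᵥ ρ • C ⊆ K}

/-- Optimal containment: `K ⊆ C` and `R(K,C) = 1`. -/
def OptCont (K C : Set V) : Prop := K ⊆ C ∧ circumradius K C = 1

/-- Minkowski asymmetry `s(C) = R(C, -C)`. -/
noncomputable def minkAsym (C : Set V) : ℝ := circumradius C (-C)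

/-- `C` is Minkowski-centered if `C ⊆opt s(C) • (-C)`. -/
def MinkowskiCentered (C : Set V) : Prop := OptCont C (minkAsym C • (-C))

/-- Arithmetic symmetrization `(K - K)/2`. -/
def symAM (K : Set V) : Set V := (2 : ℝ)⁻¹ • (K - K)

/-- Maximum symmetrization `conv (C ∪ -C)`. -/
def symMAX (C : Set V) : Set V := convexHull ℝ (C ∪ -C)

/-- Minimum symmetrization `C ∩ -C`. -/
def symMIN (C : Set V) : Set V := C ∩ -C

/-- The maximum diameter `D_MAX(K,C) = 2 R((K-K)/2, conv(C ∪ -C))`. -/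
noncomputable def DMAX (K C : Set V) : ℝ := 2 * circumradius (symAM K) (symMAX C)

/-- The minimum diameter `D_MIN(K,C) = 2 R((K-K)/2, C ∩ -C)`. -/
noncomputable def DMIN (K C : Set V) : ℝ := 2 * circumradius (symAM K) (symMIN C)

/-- A body is complete (w.r.t. a diameter functional `D`) if every strictly larger
convex body has strictly larger diameter. -/
def IsCompleteBody (D : Set V → ℝ) (K : Set V) : Prop :=
  ∀ K' : Set V, Convex ℝ K' → IsCompact K' → K ⊂ K' → D K < D K'

/-- `Kstar` is a completion of `K` w.r.t. the diameter functional `D`. -/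
def IsCompletion (D : Set V → ℝ) (K Kstar : Set V) : Prop :=
  K ⊆ Kstar ∧ Convex ℝ Kstar ∧ IsCompact Kstar ∧ IsCompleteBody D Kstar ∧ D Kstar = D K

namespace T2
noncomputable def pp1 : Fin 2 → ℝ := ![0, 1]
noncomputable def pp2 : Fin 2 → ℝ := ![-(Real.sqrt 3 / 2), -(1/2)]
noncomputable def pp3 : Fin 2 → ℝ := ![Real.sqrt 3 / 2, -(1/2)]
noncomputable def TT : Set (Fin 2 → ℝ) := convexHull ℝ {pp1, pp2, pp3}
noncomputable def TA (α : ℝ) : Set (Fin 2 → ℝ) :=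
  convexHull ℝ {α • pp1 + (1 - α) • pp2, α • pp2 + (1 - α) • pp3, α • pp3 + (1 - α) • pp1}
def lin (c0 c1 : ℝ) (x : Fin 2 → ℝ) : ℝ := c0 * x 0 + c1 * x 1
lemma lin_isLinear (c0 c1 : ℝ) : IsLinearMap ℝ (lin c0 c1) := by
  constructor
  · intro x y; simp [lin]; ring
  · intro c x; simp [lin]; ring
lemma lin_hull_le {Q : Set (Fin 2 → ℝ)} {c0 c1 r : ℝ}
    (h : ∀ x ∈ Q, lin c0 c1 x ≤ r) : ∀ x ∈ convexHull ℝ Q, lin c0 c1 x ≤ r :=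
  fun _ hx => convexHull_min h (convex_halfSpace_le (lin_isLinear c0 c1) r) hx
lemma sq3 : Real.sqrt 3 * Real.sqrt 3 = 3 := Real.mul_self_sqrt (by norm_num)

lemma mem_TT_combo {a b : ℝ} {x y : Fin 2 → ℝ} (hx : x ∈ ({pp1, pp2, pp3} : Set (Fin 2 → ℝ)))
    (hy : y ∈ ({pp1, pp2, pp3} : Set (Fin 2 → ℝ))) (ha : 0 ≤ a) (hb : 0 ≤ b) (hab : a + b = 1) :
    a • x + b • y ∈ TT :=
  (convex_convexHull ℝ _) (subset_convexHull ℝ _ hx) (subset_convexHull ℝ _ hy) ha hb hab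

lemma TA_subset_TT {α : ℝ} (hα : α ∈ Set.Icc (1/3 : ℝ) (2/3 : ℝ)) : TA α ⊆ TT := by
  obtain ⟨h1, h2⟩ := hα
  apply convexHull_min _ (convex_convexHull ℝ _)
  rintro x (rfl | rfl | rfl)
  · exact mem_TT_combo (by simp) (by simp) (by linarith) (by linarith) (by ring)
  · exact mem_TT_combo (by simp) (by simp) (by linarith) (by linarith) (by ring)
  · exact mem_TT_combo (by simp) (by simp) (by linarith) (by linarith) (by ring)

-- bounds of the three edge functionals on T's vertices
lemma U1_bound : ∀ x ∈ TT, lin (-(Real.sqrt 3)) 1 x ≤ 1 := by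
  apply lin_hull_le
  rintro x (rfl | rfl | rfl) <;> simp [lin, pp1, pp2, pp3] <;> nlinarith [sq3, Real.sqrt_nonneg 3]
lemma U2_bound : ∀ x ∈ TT, lin 0 (-2) x ≤ 1 := by
  apply lin_hull_le
  rintro x (rfl | rfl | rfl) <;> simp [lin, pp1, pp2, pp3] <;> nlinarith [sq3, Real.sqrt_nonneg 3]
lemma U3_bound : ∀ x ∈ TT, lin (Real.sqrt 3) 1 x ≤ 1 := by
  apply lin_hull_le
  rintro x (rfl | rfl | rfl) <;> simp [lin, pp1, pp2, pp3] <;> nlinarith [sq3, Real.sqrt_nonneg 3]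

lemma circ_TA (α : ℝ) (hα : α ∈ Set.Icc (1/3 : ℝ) (2/3 : ℝ)) : circumradius (TA α) TT = 1 := by
  obtain ⟨ha1, ha2⟩ := hα
  have hmem : (1 : ℝ) ∈ {ρ : ℝ | 0 ≤ ρ ∧ ∃ t : Fin 2 → ℝ, TA α ⊆ t +ᵥ ρ • TT} := by
    refine ⟨zero_le_one, 0, ?_⟩
    rw [zero_vadd, one_smul]
    exact TA_subset_TT ⟨ha1, ha2⟩
  apply le_antisymm
  · apply csInf_le ⟨0, fun ρ hρ => hρ.1⟩ hmem
  · apply le_csInf ⟨1, hmem⟩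
    rintro ρ ⟨hρ0, t, hsub⟩
    -- the three vertices of TA
    set q1 := α • pp1 + (1 - α) • pp2 with hq1
    set q2 := α • pp2 + (1 - α) • pp3 with hq2
    set q3 := α • pp3 + (1 - α) • pp1 with hq3
    have hmq1 : q1 ∈ TA α := subset_convexHull ℝ _ (by simp [TA, hq1])
    have hmq2 : q2 ∈ TA α := subset_convexHull ℝ _ (by simp [TA, hq2])
    have hmq3 : q3 ∈ TA α := subset_convexHull ℝ _ (by simp [TA, hq3])
    obtain ⟨y1, hy1, he1⟩ := hsub hmq1
    obtain ⟨y2, hy2, he2⟩ := hsub hmq2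
    obtain ⟨y3, hy3, he3⟩ := hsub hmq3
    obtain ⟨z1, hz1, rfl⟩ := hy1
    obtain ⟨z2, hz2, rfl⟩ := hy2
    obtain ⟨z3, hz3, rfl⟩ := hy3
    -- he1 : t +ᵥ ρ • z1 = q1
    have b1 := U1_bound z1 hz1
    have b2 := U2_bound z2 hz2
    have b3 := U3_bound z3 hz3
    have e1 : lin (-(Real.sqrt 3)) 1 q1 = lin (-(Real.sqrt 3)) 1 t + ρ * lin (-(Real.sqrt 3)) 1 z1 := by
      rw [← he1]; simp [lin]; ring
    have e2 : lin 0 (-2) q2 = lin 0 (-2) t + ρ * lin 0 (-2) z2 := by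
      rw [← he2]; simp [lin]; ring
    have e3 : lin (Real.sqrt 3) 1 q3 = lin (Real.sqrt 3) 1 t + ρ * lin (Real.sqrt 3) 1 z3 := by
      rw [← he3]; simp [lin]; ring
    have v1 : lin (-(Real.sqrt 3)) 1 q1 = 1 := by
      simp [lin, hq1, pp1, pp2]; nlinarith [sq3]
    have v2 : lin 0 (-2) q2 = 1 := by
      simp [lin, hq2, pp2, pp3]; ring
    have v3 : lin (Real.sqrt 3) 1 q3 = 1 := by
      simp [lin, hq3, pp1, pp3]; nlinarith [sq3]
    have tsum : lin (-(Real.sqrt 3)) 1 t + lin 0 (-2) t + lin (Real.sqrt 3) 1 t = 0 := by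
      simp [lin]; ring
    nlinarith [mul_le_mul_of_nonneg_left b1 hρ0, mul_le_mul_of_nonneg_left b2 hρ0,
      mul_le_mul_of_nonneg_left b3 hρ0]

section Inradius
variable {α : ℝ}

lemma L_pos : 0 < 3 * α ^ 2 - 3 * α + 1 := by nlinarith [sq_nonneg (2*α - 1)]

lemma q1_mem : α • pp1 + (1 - α) • pp2 ∈ TA α := subset_convexHull ℝ _ (by simp [TA])
lemma q2_mem : α • pp2 + (1 - α) • pp3 ∈ TA α := subset_convexHull ℝ _ (by simp [TA])
lemma q3_mem : α • pp3 + (1 - α) • pp1 ∈ TA α := subset_convexHull ℝ _ (by simp [TA])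

lemma combo_mem_TA {a b : ℝ} {x y : Fin 2 → ℝ} (hx : x ∈ TA α) (hy : y ∈ TA α)
    (ha : 0 ≤ a) (hb : 0 ≤ b) (hab : a + b = 1) : a • x + b • y ∈ TA α :=
  (convex_convexHull ℝ _) hx hy ha hb hab

lemma smul_pp1_mem (hα : α ∈ Set.Icc (1/3 : ℝ) (2/3 : ℝ)) :
    (3 * α ^ 2 - 3 * α + 1) • pp1 ∈ TA α := by
  have h : (3 * α ^ 2 - 3 * α + 1) • pp1
      = α • (α • pp1 + (1 - α) • pp2) + (1 - α) • (α • pp3 + (1 - α) • pp1) := by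
    funext i; fin_cases i <;> simp [pp1, pp2, pp3] <;> ring
  rw [h]
  exact combo_mem_TA q1_mem q3_mem (by linarith [hα.1]) (by linarith [hα.2]) (by ring)

lemma smul_pp2_mem (hα : α ∈ Set.Icc (1/3 : ℝ) (2/3 : ℝ)) :
    (3 * α ^ 2 - 3 * α + 1) • pp2 ∈ TA α := by
  have h : (3 * α ^ 2 - 3 * α + 1) • pp2
      = α • (α • pp2 + (1 - α) • pp3) + (1 - α) • (α • pp1 + (1 - α) • pp2) := by
    funext i; fin_cases i <;> simp [pp1, pp2, pp3] <;> ring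
  rw [h]
  exact combo_mem_TA q2_mem q1_mem (by linarith [hα.1]) (by linarith [hα.2]) (by ring)

lemma smul_pp3_mem (hα : α ∈ Set.Icc (1/3 : ℝ) (2/3 : ℝ)) :
    (3 * α ^ 2 - 3 * α + 1) • pp3 ∈ TA α := by
  have h : (3 * α ^ 2 - 3 * α + 1) • pp3
      = α • (α • pp3 + (1 - α) • pp1) + (1 - α) • (α • pp2 + (1 - α) • pp3) := by
    funext i; fin_cases i <;> simp [pp1, pp2, pp3] <;> ring
  rw [h]
  exact combo_mem_TA q3_mem q2_mem (by linarith [hα.1]) (by linarith [hα.2]) (by ring)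

-- bounds of the edge functionals of TA on TA
lemma N1_bound (hα : α ∈ Set.Icc (1/3 : ℝ) (2/3 : ℝ)) :
    ∀ x ∈ TA α, lin (-(Real.sqrt 3 * α)) (3 * α - 2) x ≤ 3 * α ^ 2 - 3 * α + 1 := by
  apply lin_hull_le
  rintro x (rfl | rfl | rfl) <;> simp [lin, pp1, pp2, pp3] <;>
    nlinarith [sq3, Real.sqrt_nonneg 3, L_pos (α := α)]
lemma N2_bound (hα : α ∈ Set.Icc (1/3 : ℝ) (2/3 : ℝ)) :
    ∀ x ∈ TA α, lin (Real.sqrt 3 * (1 - α)) (1 - 3 * α) x ≤ 3 * α ^ 2 - 3 * α + 1 := by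
  apply lin_hull_le
  rintro x (rfl | rfl | rfl) <;> simp [lin, pp1, pp2, pp3] <;>
    nlinarith [sq3, Real.sqrt_nonneg 3, L_pos (α := α)]
lemma N3_bound (hα : α ∈ Set.Icc (1/3 : ℝ) (2/3 : ℝ)) :
    ∀ x ∈ TA α, lin (Real.sqrt 3 * (2 * α - 1)) 1 x ≤ 3 * α ^ 2 - 3 * α + 1 := by
  apply lin_hull_le
  rintro x (rfl | rfl | rfl) <;> simp [lin, pp1, pp2, pp3] <;>
    nlinarith [sq3, Real.sqrt_nonneg 3, L_pos (α := α)]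

lemma inr_TA (hα : α ∈ Set.Icc (1/3 : ℝ) (2/3 : ℝ)) :
    inradius (TA α) TT = 3 * α ^ 2 - 3 * α + 1 := by
  have hL := L_pos (α := α)
  have hmem : (3 * α ^ 2 - 3 * α + 1) ∈
      {ρ : ℝ | 0 ≤ ρ ∧ ∃ t : Fin 2 → ℝ, t +ᵥ ρ • TT ⊆ TA α} := by
    refine ⟨le_of_lt hL, 0, ?_⟩
    rw [zero_vadd, TT, ← convexHull_smul]
    apply convexHull_min _ (convex_convexHull ℝ _)
    intro x hx
    simp only [smul_set_insert, smul_set_singleton, mem_insert_iff, mem_singleton_iff] at hx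
    rcases hx with rfl | rfl | rfl
    · exact smul_pp1_mem hα
    · exact smul_pp2_mem hα
    · exact smul_pp3_mem hα
  have hub : ∀ ρ ∈ {ρ : ℝ | 0 ≤ ρ ∧ ∃ t : Fin 2 → ℝ, t +ᵥ ρ • TT ⊆ TA α},
      ρ ≤ 3 * α ^ 2 - 3 * α + 1 := by
    rintro ρ ⟨hρ0, t, hsub⟩
    have hp1 : pp1 ∈ TT := subset_convexHull ℝ _ (by simp)
    have hp2 : pp2 ∈ TT := subset_convexHull ℝ _ (by simp)
    have hp3 : pp3 ∈ TT := subset_convexHull ℝ _ (by simp)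
    have m2 : t + ρ • pp2 ∈ TA α := hsub (vadd_mem_vadd_set (smul_mem_smul_set hp2))
    have m3 : t + ρ • pp3 ∈ TA α := hsub (vadd_mem_vadd_set (smul_mem_smul_set hp3))
    have m1 : t + ρ • pp1 ∈ TA α := hsub (vadd_mem_vadd_set (smul_mem_smul_set hp1))
    have b1 := N1_bound hα _ m2
    have b2 := N2_bound hα _ m3
    have b3 := N3_bound hα _ m1
    have e1 : lin (-(Real.sqrt 3 * α)) (3 * α - 2) (t + ρ • pp2)
        = lin (-(Real.sqrt 3 * α)) (3 * α - 2) t + ρ * 1 := by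
      simp [lin, pp2]; linear_combination (α * ρ / 2) * sq3
    have e2 : lin (Real.sqrt 3 * (1 - α)) (1 - 3 * α) (t + ρ • pp3)
        = lin (Real.sqrt 3 * (1 - α)) (1 - 3 * α) t + ρ * 1 := by
      simp [lin, pp3]; linear_combination ((1 - α) * ρ / 2) * sq3
    have e3 : lin (Real.sqrt 3 * (2 * α - 1)) 1 (t + ρ • pp1)
        = lin (Real.sqrt 3 * (2 * α - 1)) 1 t + ρ * 1 := by
      simp [lin, pp1]; ring
    have tsum : lin (-(Real.sqrt 3 * α)) (3 * α - 2) t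
        + lin (Real.sqrt 3 * (1 - α)) (1 - 3 * α) t
        + lin (Real.sqrt 3 * (2 * α - 1)) 1 t = 0 := by
      simp [lin]; ring
    rw [e1] at b1; rw [e2] at b2; rw [e3] at b3
    linarith
  exact le_antisymm (csSup_le ⟨_, hmem⟩ hub) (le_csSup ⟨_, hub⟩ hmem)

end Inradius

section Dmax
variable {α : ℝ}

lemma hexP1 : pp1 ∈ symMAX TT := subset_convexHull ℝ _ (Or.inl (subset_convexHull ℝ _ (by simp)))
lemma hexP2 : pp2 ∈ symMAX TT := subset_convexHull ℝ _ (Or.inl (subset_convexHull ℝ _ (by simp)))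
lemma hexP3 : pp3 ∈ symMAX TT := subset_convexHull ℝ _ (Or.inl (subset_convexHull ℝ _ (by simp)))
lemma hexN1 : -pp1 ∈ symMAX TT :=
  subset_convexHull ℝ _ (Or.inr (Set.neg_mem_neg.2 (subset_convexHull ℝ _ (by simp))))
lemma hexN2 : -pp2 ∈ symMAX TT :=
  subset_convexHull ℝ _ (Or.inr (Set.neg_mem_neg.2 (subset_convexHull ℝ _ (by simp))))
lemma hexN3 : -pp3 ∈ symMAX TT :=
  subset_convexHull ℝ _ (Or.inr (Set.neg_mem_neg.2 (subset_convexHull ℝ _ (by simp))))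

lemma combo_mem_hex {a b : ℝ} {x y : Fin 2 → ℝ} (hx : x ∈ symMAX TT) (hy : y ∈ symMAX TT)
    (ha : 0 ≤ a) (hb : 0 ≤ b) (hab : a + b = 1) : a • x + b • y ∈ symMAX TT :=
  (convex_convexHull ℝ _) hx hy ha hb hab

lemma zero_mem_hex : (0 : Fin 2 → ℝ) ∈ symMAX TT := by
  have h := combo_mem_hex (a := 1/2) (b := 1/2) hexP1 hexN1 (by norm_num) (by norm_num) (by norm_num)
  simpa using h

lemma sub_subset_hex (hα : α ∈ Set.Icc (1/3 : ℝ) (2/3 : ℝ)) : TA α - TA α ⊆ symMAX TT := by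
  obtain ⟨ha1, ha2⟩ := hα
  rw [TA, ← convexHull_sub]
  apply convexHull_min _ (convex_convexHull ℝ _)
  rintro x ⟨a, (rfl | rfl | rfl), b, (rfl | rfl | rfl), rfl⟩
  · show _ - _ ∈ _
    rw [sub_self]; exact zero_mem_hex
  · -- q1 - q2 = (3α-1) pp1 + (2-3α)(-pp3)
    have h : (α • pp1 + (1 - α) • pp2) - (α • pp2 + (1 - α) • pp3)
        = (3*α - 1) • pp1 + (2 - 3*α) • (-pp3) := by
      funext i; fin_cases i <;> simp [pp1, pp2, pp3] <;> ring
    show _ - _ ∈ _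
    rw [h]; exact combo_mem_hex hexP1 hexN3 (by linarith) (by linarith) (by ring)
  · -- q1 - q3 = -(q3 - q1) = (3α-1)(-pp3) + (2-3α) pp2
    have h : (α • pp1 + (1 - α) • pp2) - (α • pp3 + (1 - α) • pp1)
        = (3*α - 1) • (-pp3) + (2 - 3*α) • pp2 := by
      funext i; fin_cases i <;> simp [pp1, pp2, pp3] <;> ring
    show _ - _ ∈ _
    rw [h]; exact combo_mem_hex hexN3 hexP2 (by linarith) (by linarith) (by ring)
  · -- q2 - q1
    have h : (α • pp2 + (1 - α) • pp3) - (α • pp1 + (1 - α) • pp2)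
        = (3*α - 1) • (-pp1) + (2 - 3*α) • pp3 := by
      funext i; fin_cases i <;> simp [pp1, pp2, pp3] <;> ring
    show _ - _ ∈ _
    rw [h]; exact combo_mem_hex hexN1 hexP3 (by linarith) (by linarith) (by ring)
  · show _ - _ ∈ _
    rw [sub_self]; exact zero_mem_hex
  · -- q2 - q3 = (3α-1) pp2 + (2-3α)(-pp1)
    have h : (α • pp2 + (1 - α) • pp3) - (α • pp3 + (1 - α) • pp1)
        = (3*α - 1) • pp2 + (2 - 3*α) • (-pp1) := by
      funext i; fin_cases i <;> simp [pp1, pp2, pp3] <;> ring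
    show _ - _ ∈ _
    rw [h]; exact combo_mem_hex hexP2 hexN1 (by linarith) (by linarith) (by ring)
  · -- q3 - q1 = (3α-1) pp3 + (2-3α)(-pp2)
    have h : (α • pp3 + (1 - α) • pp1) - (α • pp1 + (1 - α) • pp2)
        = (3*α - 1) • pp3 + (2 - 3*α) • (-pp2) := by
      funext i; fin_cases i <;> simp [pp1, pp2, pp3] <;> ring
    show _ - _ ∈ _
    rw [h]; exact combo_mem_hex hexP3 hexN2 (by linarith) (by linarith) (by ring)
  · -- q3 - q2
    have h : (α • pp3 + (1 - α) • pp1) - (α • pp2 + (1 - α) • pp3)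
        = (3*α - 1) • (-pp2) + (2 - 3*α) • pp1 := by
      funext i; fin_cases i <;> simp [pp1, pp2, pp3] <;> ring
    show _ - _ ∈ _
    rw [h]; exact combo_mem_hex hexN2 hexP1 (by linarith) (by linarith) (by ring)
  · show _ - _ ∈ _
    rw [sub_self]; exact zero_mem_hex

lemma hex_bound_m : ∀ x ∈ symMAX TT, lin (-1) (Real.sqrt 3) x ≤ Real.sqrt 3 := by
  apply lin_hull_le
  rintro x (hx | hx)
  · refine lin_hull_le ?_ x hx
    rintro y (rfl | rfl | rfl) <;> simp [lin, pp1, pp2, pp3] <;>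
      nlinarith [Real.sqrt_nonneg 3]
  · rw [Set.mem_neg] at hx
    have h := lin_hull_le (Q := {pp1, pp2, pp3}) (c0 := 1) (c1 := -(Real.sqrt 3))
      (r := Real.sqrt 3) ?_ (-x) hx
    · simp only [lin] at h ⊢
      simp only [Pi.neg_apply] at h
      linarith
    · rintro y (rfl | rfl | rfl) <;> simp [lin, pp1, pp2, pp3] <;>
        nlinarith [Real.sqrt_nonneg 3]

lemma hex_bound_mneg : ∀ x ∈ symMAX TT, lin 1 (-(Real.sqrt 3)) x ≤ Real.sqrt 3 := by
  apply lin_hull_le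
  rintro x (hx | hx)
  · refine lin_hull_le ?_ x hx
    rintro y (rfl | rfl | rfl) <;> simp [lin, pp1, pp2, pp3] <;>
      nlinarith [Real.sqrt_nonneg 3]
  · rw [Set.mem_neg] at hx
    have h := lin_hull_le (Q := {pp1, pp2, pp3}) (c0 := -1) (c1 := Real.sqrt 3)
      (r := Real.sqrt 3) ?_ (-x) hx
    · simp only [lin] at h ⊢
      simp only [Pi.neg_apply] at h
      linarith
    · rintro y (rfl | rfl | rfl) <;> simp [lin, pp1, pp2, pp3] <;>
        nlinarith [Real.sqrt_nonneg 3]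

lemma circ_sym (hα : α ∈ Set.Icc (1/3 : ℝ) (2/3 : ℝ)) :
    circumradius (symAM (TA α)) (symMAX TT) = 1/2 := by
  have hmem : (1/2 : ℝ) ∈ {ρ : ℝ | 0 ≤ ρ ∧ ∃ t : Fin 2 → ℝ, symAM (TA α) ⊆ t +ᵥ ρ • symMAX TT} := by
    refine ⟨by norm_num, 0, ?_⟩
    rw [zero_vadd]
    have h2 : ((1:ℝ)/2) • symMAX TT = (2:ℝ)⁻¹ • symMAX TT := by norm_num
    rw [h2, symAM]
    exact smul_set_mono (sub_subset_hex hα)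
  apply le_antisymm
  · exact csInf_le ⟨0, fun ρ hρ => hρ.1⟩ hmem
  · apply le_csInf ⟨_, hmem⟩
    rintro ρ ⟨hρ0, t, hsub⟩
    set q1 := α • pp1 + (1 - α) • pp2 with hq1
    set q2 := α • pp2 + (1 - α) • pp3 with hq2
    have hz : (2:ℝ)⁻¹ • (q1 - q2) ∈ symAM (TA α) :=
      smul_mem_smul_set (Set.sub_mem_sub q1_mem q2_mem)
    have hz' : (2:ℝ)⁻¹ • (q2 - q1) ∈ symAM (TA α) :=
      smul_mem_smul_set (Set.sub_mem_sub q2_mem q1_mem)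
    obtain ⟨y, hy, he⟩ := hsub hz
    obtain ⟨y', hy', he'⟩ := hsub hz'
    obtain ⟨w, hw, rfl⟩ := hy
    obtain ⟨w', hw', rfl⟩ := hy'
    have bw := hex_bound_m w hw
    have bw' := hex_bound_mneg w' hw'
    have he2 : t + ρ • w = (2:ℝ)⁻¹ • (q1 - q2) := he
    have he2' : t + ρ • w' = (2:ℝ)⁻¹ • (q2 - q1) := he'
    have c1 : lin (-1) (Real.sqrt 3) ((2:ℝ)⁻¹ • (q1 - q2)) = Real.sqrt 3 / 2 := by
      simp [lin, hq1, hq2, pp1, pp2, pp3]; ring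
    have c2 : lin 1 (-(Real.sqrt 3)) ((2:ℝ)⁻¹ • (q2 - q1)) = Real.sqrt 3 / 2 := by
      simp [lin, hq1, hq2, pp1, pp2, pp3]; ring
    have d1 : lin (-1) (Real.sqrt 3) (t + ρ • w)
        = lin (-1) (Real.sqrt 3) t + ρ * lin (-1) (Real.sqrt 3) w := by simp [lin]; ring
    have d2 : lin 1 (-(Real.sqrt 3)) (t + ρ • w')
        = lin 1 (-(Real.sqrt 3)) t + ρ * lin 1 (-(Real.sqrt 3)) w' := by simp [lin]; ring
    have key : lin 1 (-(Real.sqrt 3)) t = - lin (-1) (Real.sqrt 3) t := by simp [lin]; ring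
    have E1 : lin (-1) (Real.sqrt 3) t + ρ * lin (-1) (Real.sqrt 3) w = Real.sqrt 3 / 2 := by
      rw [← d1, he2, c1]
    have E2 : - lin (-1) (Real.sqrt 3) t + ρ * lin 1 (-(Real.sqrt 3)) w' = Real.sqrt 3 / 2 := by
      rw [← key, ← d2, he2', c2]
    have h3 : (0:ℝ) < Real.sqrt 3 := Real.sqrt_pos.2 (by norm_num)
    have prod : 0 * Real.sqrt 3 ≤ (2 * ρ - 1) * Real.sqrt 3 := by
      nlinarith [mul_le_mul_of_nonneg_left bw hρ0, mul_le_mul_of_nonneg_left bw' hρ0]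
    have hfin : (0:ℝ) ≤ 2 * ρ - 1 := le_of_mul_le_mul_right prod h3
    linarith

end Dmax
end T2

/-- For the Minkowski-centered equilateral triangle `T` and the rotated inscribed triangles
`T_α` (α ∈ [1/3, 2/3]): `D_MAX(T_α, T) = R(T_α, T)` and
`r(T_α, T) = (1 - 3α + 3α²) R(T_α, T)`. -/
theorem Talpha_jung_extremal (α : ℝ) (hα : α ∈ Set.Icc (1/3 : ℝ) (2/3 : ℝ)) :
    let p1 : Fin 2 → ℝ := ![0, 1]
    let p2 : Fin 2 → ℝ := ![-(Real.sqrt 3 / 2), -(1/2)]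
    let p3 : Fin 2 → ℝ := ![Real.sqrt 3 / 2, -(1/2)]
    let T : Set (Fin 2 → ℝ) := convexHull ℝ {p1, p2, p3}
    let Tα : Set (Fin 2 → ℝ) :=
      convexHull ℝ {α • p1 + (1 - α) • p2, α • p2 + (1 - α) • p3, α • p3 + (1 - α) • p1}
    DMAX Tα T = circumradius Tα T ∧
      inradius Tα T = (1 - 3 * α + 3 * α ^ 2) * circumradius Tα T := by
  intro p1 p2 p3 T Tα
  have hT : T = T2.TT := rfl
  have hTα : Tα = T2.TA α := rfl
  rw [hT, hTα]
  have hc := T2.circ_TA α hα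
  have hi := T2.inr_TA hα
  have hd : DMAX (T2.TA α) T2.TT = 1 := by
    show 2 * circumradius (symAM (T2.TA α)) (symMAX T2.TT) = 1
    rw [T2.circ_sym hα]; norm_num
  refine ⟨by rw [hd, hc], by rw [hi, hc]; ring⟩
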